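/- Let K : ℝ^m → ℝ satisfy either (a) K is Lipschitz with constant Λ₁ and K(w) = 0 for ‖w‖ > L, or (b) K is differentiable with ‖∂K/∂w‖_∞ ≤ Λ₁ everywhere and ‖∂K/∂w‖_∞ ≤ Λ₁‖w‖^{-ν} for ‖w‖ > L, with ν > 1. Then there exists a bounded integrable function K* : ℝ^m → [0,∞) such that for all w₁, w₂ with ‖w₁ − w₂‖ ≤ δ ≤ L, |K(w₂) − K(w₁)| ≤ δ K*(w₁). In case (a) one may take K*(u) = 2m Λ₁ 𝟙(‖u‖ ≤ 2L); in case (b), K*(u) = 2m[Λ₁ 𝟙(‖u‖ ≤ 2L) + (‖u‖ − L)^{-ν} 𝟙(‖u‖ > 2L)]. -/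

import Mathlib

open MeasureTheory

/-- if `K : ℝ^m → ℝ` is either (a) `Λ₁`-Lipschitz with `K = 0` outside the ball
of radius `L`, or (b) differentiable with `‖∂K/∂w‖ ≤ Λ₁` everywhere and
`‖∂K/∂w‖ ≤ Λ₁ ‖w‖^{−ν}` for `‖w‖ > L` (with `ν > 1`, and `ν > m` for integrability of the
tail), then there is a bounded, integrable, nonnegative `K*` such that
`|K(w₂) − K(w₁)| ≤ δ K*(w₁)` whenever `‖w₁ − w₂‖ ≤ δ ≤ L`. -/
theorem statement13 {m : ℕ} (hm : 1 ≤ m) (K : (Fin m → ℝ) → ℝ) (hKmeas : Measurable K)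
    (Λ₁ L ν : ℝ) (hΛ₁ : 0 ≤ Λ₁) (hL : 0 < L) (hν₁ : 1 < ν) (hνm : (m : ℝ) < ν)
    (hcase :
      ((∀ w, ‖w‖ > L → K w = 0) ∧ ∀ w w', |K w - K w'| ≤ Λ₁ * ‖w - w'‖) ∨
      (Differentiable ℝ K ∧ (∀ w, ‖fderiv ℝ K w‖ ≤ Λ₁) ∧
        ∀ w, ‖w‖ > L → ‖fderiv ℝ K w‖ ≤ Λ₁ * ‖w‖ ^ (-ν))) :
    ∃ Kstar : (Fin m → ℝ) → ℝ,
      (∀ u, 0 ≤ Kstar u) ∧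
      (∃ C : ℝ, ∀ u, Kstar u ≤ C) ∧
      Integrable Kstar (volume : Measure (Fin m → ℝ)) ∧
      ∀ w₁ w₂ : Fin m → ℝ, ∀ δ : ℝ, 0 ≤ δ → δ ≤ L → ‖w₁ - w₂‖ ≤ δ →
        |K w₂ - K w₁| ≤ δ * Kstar w₁ := by
  classical
  have hν0 : (0:ℝ) ≤ ν := by linarith
  rcases hcase with ⟨hvan, hlip⟩ | ⟨hdiff, hbd, htail⟩
  · -- case (a)
    refine ⟨fun u => if ‖u‖ ≤ 2*L then Λ₁ else 0, ?_, ⟨Λ₁, ?_⟩, ?_, ?_⟩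
    · intro u; dsimp only; split_ifs <;> simp [hΛ₁]
    · intro u; dsimp only; split_ifs <;> simp [hΛ₁]
    · have : (fun u : Fin m → ℝ => if ‖u‖ ≤ 2*L then Λ₁ else 0)
          = (Metric.closedBall (0 : Fin m → ℝ) (2*L)).indicator (fun _ => Λ₁) := by
        funext u
        rw [Set.indicator_apply]
        simp only [Metric.mem_closedBall, dist_zero_right]
      rw [this, integrable_indicator_iff measurableSet_closedBall]
      exact integrableOn_const (measure_closedBall_lt_top).ne
    · intro w₁ w₂ δ hδ0 hδL hdist
      by_cases h1 : ‖w₁‖ ≤ 2*L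
      · simp only [h1, if_true]
        calc |K w₂ - K w₁| ≤ Λ₁ * ‖w₂ - w₁‖ := hlip w₂ w₁
          _ ≤ Λ₁ * δ := by
              rw [norm_sub_rev]; exact mul_le_mul_of_nonneg_left hdist hΛ₁
          _ = δ * Λ₁ := mul_comm _ _
      · push_neg at h1
        have hw1 : K w₁ = 0 := hvan w₁ (by linarith)
        have hw2 : K w₂ = 0 := by
          apply hvan
          have : ‖w₁‖ - ‖w₂‖ ≤ ‖w₁ - w₂‖ := norm_sub_norm_le _ _
          linarith
        simp only [hw1, hw2, sub_zero, abs_zero]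
        have : ¬ ‖w₁‖ ≤ 2*L := by linarith
        simp [this]
  · -- case (b)
    set Kstar : (Fin m → ℝ) → ℝ :=
      fun u => if ‖u‖ ≤ 2*L then Λ₁ else Λ₁ * (‖u‖ - L) ^ (-ν) with hKstar
    have hnonneg : ∀ u, 0 ≤ Kstar u := by
      intro u; rw [hKstar]; dsimp only; split_ifs with h
      · exact hΛ₁
      · push_neg at h
        exact mul_nonneg hΛ₁ (Real.rpow_nonneg (by linarith) _)
    refine ⟨Kstar, hnonneg, ⟨Λ₁ * max 1 (L ^ (-ν)), ?_⟩, ?_, ?_⟩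
    · intro u; rw [hKstar]; dsimp only; split_ifs with h
      · calc Λ₁ = Λ₁ * 1 := (mul_one _).symm
          _ ≤ Λ₁ * max 1 (L ^ (-ν)) :=
            mul_le_mul_of_nonneg_left (le_max_left _ _) hΛ₁
      · push_neg at h
        have h2 : (‖u‖ - L) ^ (-ν) ≤ L ^ (-ν) :=
          Real.rpow_le_rpow_of_nonpos hL (by linarith) (by linarith)
        calc Λ₁ * (‖u‖ - L) ^ (-ν) ≤ Λ₁ * L ^ (-ν) :=
              mul_le_mul_of_nonneg_left h2 hΛ₁
          _ ≤ Λ₁ * max 1 (L ^ (-ν)) :=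
              mul_le_mul_of_nonneg_left (le_max_right _ _) hΛ₁
    · -- integrability
      set c : ℝ := max (1 + 2*L) (2 + 1/L) with hc
      have hc1 : (1:ℝ) ≤ c := le_trans (by linarith) (le_max_left _ _)
      have hc0 : (0:ℝ) < c := by linarith
      have hmeas : Measurable Kstar := by
        rw [hKstar]
        apply Measurable.ite (measurableSet_le measurable_norm measurable_const)
          measurable_const
        exact (measurable_const.mul ((measurable_norm.sub measurable_const).pow_const _))
      have hfin : (Module.finrank ℝ (Fin m → ℝ) : ℝ) < ν := by
        simpa using hνm
      have hint : Integrable (fun u : Fin m → ℝ => Λ₁ * c ^ ν * (1 + ‖u‖) ^ (-ν))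
          (volume : Measure (Fin m → ℝ)) :=
        (integrable_one_add_norm hfin).const_mul _
      refine hint.mono' hmeas.aestronglyMeasurable (Filter.Eventually.of_forall ?_)
      intro u
      rw [Real.norm_of_nonneg (hnonneg u)]
      have hu0 : (0:ℝ) < 1 + ‖u‖ := by positivity
      have key : ∀ x : ℝ, 0 < x → 1 + ‖u‖ ≤ c * x → Kstar u ≤ Λ₁ * x ^ (-ν) →
          Kstar u ≤ Λ₁ * c ^ ν * (1 + ‖u‖) ^ (-ν) := by
        intro x hx hcx hKx
        have h1 : (1 + ‖u‖) ^ (-ν) ≥ (c * x) ^ (-ν) :=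
          Real.rpow_le_rpow_of_nonpos hu0 hcx (by linarith)
        have h2 : (c * x) ^ (-ν) = c ^ (-ν) * x ^ (-ν) :=
          Real.mul_rpow hc0.le hx.le
        have h3 : x ^ (-ν) = c ^ ν * (c ^ (-ν) * x ^ (-ν)) := by
          rw [← mul_assoc, ← Real.rpow_add hc0]
          simp
        calc Kstar u ≤ Λ₁ * x ^ (-ν) := hKx
          _ = Λ₁ * c ^ ν * (c ^ (-ν) * x ^ (-ν)) := by
              conv_lhs => rw [h3]
              ring
          _ = Λ₁ * c ^ ν * (c * x) ^ (-ν) := by rw [h2]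
          _ ≤ Λ₁ * c ^ ν * (1 + ‖u‖) ^ (-ν) := by
              apply mul_le_mul_of_nonneg_left h1
              positivity
      by_cases h : ‖u‖ ≤ 2*L
      · refine key 1 one_pos ?_ ?_
        · have : 1 + 2*L ≤ c := le_max_left _ _
          calc 1 + ‖u‖ ≤ 1 + 2*L := by linarith
            _ = (1 + 2*L) * 1 := (mul_one _).symm
            _ ≤ c * 1 := by linarith
        · rw [hKstar]; simp [h, hΛ₁]
      · push_neg at h
        refine key (‖u‖ - L) (by linarith) ?_ ?_
        · have hc2 : 2 + 1/L ≤ c := le_max_right _ _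
          have hL' : (0:ℝ) < 1/L := by positivity
          have h1 : (2 + 1/L) * (‖u‖ - L) ≤ c * (‖u‖ - L) := by
            apply mul_le_mul_of_nonneg_right hc2; linarith
          have h2 : 1 + ‖u‖ ≤ (2 + 1/L) * (‖u‖ - L) := by
            have hLu : 2*L < ‖u‖ := h
            have e1 : (2 + 1/L) * (‖u‖ - L) = 2*‖u‖ - 2*L + ‖u‖/L - 1 := by
              field_simp; ring
            have e2 : 2 < ‖u‖/L := by
              rw [lt_div_iff₀ hL]; linarith
            linarith
          linarith
        · rw [hKstar]; simp only [not_le.2 h, if_false]; exact le_refl _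
    · -- the key inequality
      intro w₁ w₂ δ hδ0 hδL hdist
      by_cases h1 : ‖w₁‖ ≤ 2*L
      · have hKb : |K w₂ - K w₁| ≤ Λ₁ * ‖w₂ - w₁‖ :=
          convex_univ.norm_image_sub_le_of_norm_fderiv_le
            (fun x _ => hdiff.differentiableAt) (fun x _ => hbd x)
            (Set.mem_univ _) (Set.mem_univ _)
        rw [hKstar]; simp only [h1, if_true]
        calc |K w₂ - K w₁| ≤ Λ₁ * ‖w₂ - w₁‖ := hKb
          _ ≤ Λ₁ * δ := by
              rw [norm_sub_rev]; exact mul_le_mul_of_nonneg_left hdist hΛ₁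
          _ = δ * Λ₁ := mul_comm _ _
      · push_neg at h1
        have hball : ∀ x ∈ Metric.closedBall w₁ δ,
            ‖fderiv ℝ K x‖ ≤ Λ₁ * (‖w₁‖ - L) ^ (-ν) := by
          intro x hx
          rw [Metric.mem_closedBall, dist_eq_norm] at hx
          have hxn : ‖w₁‖ - δ ≤ ‖x‖ := by
            have : ‖w₁‖ - ‖x‖ ≤ ‖w₁ - x‖ := norm_sub_norm_le _ _
            rw [norm_sub_rev] at this
            linarith
          have hxL : L < ‖x‖ := by linarith
          have h2 : ‖x‖ ^ (-ν) ≤ (‖w₁‖ - L) ^ (-ν) :=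
            Real.rpow_le_rpow_of_nonpos (by linarith) (by linarith) (by linarith)
          calc ‖fderiv ℝ K x‖ ≤ Λ₁ * ‖x‖ ^ (-ν) := htail x hxL
            _ ≤ Λ₁ * (‖w₁‖ - L) ^ (-ν) := mul_le_mul_of_nonneg_left h2 hΛ₁
        have hKb : |K w₂ - K w₁| ≤ (Λ₁ * (‖w₁‖ - L) ^ (-ν)) * ‖w₂ - w₁‖ :=
          (convex_closedBall w₁ δ).norm_image_sub_le_of_norm_fderiv_le
            (fun x _ => hdiff.differentiableAt) hball
            (Metric.mem_closedBall_self hδ0)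
            (by rw [Metric.mem_closedBall, dist_eq_norm, norm_sub_rev]; exact hdist)
        rw [hKstar]; simp only [not_le.2 h1, if_false]
        calc |K w₂ - K w₁| ≤ (Λ₁ * (‖w₁‖ - L) ^ (-ν)) * ‖w₂ - w₁‖ := hKb
          _ ≤ (Λ₁ * (‖w₁‖ - L) ^ (-ν)) * δ := by
              apply mul_le_mul_of_nonneg_left _
                (mul_nonneg hΛ₁ (Real.rpow_nonneg (by linarith) _))
              rw [norm_sub_rev]; exact hdist
          _ = δ * (Λ₁ * (‖w₁‖ - L) ^ (-ν)) := mul_comm _ _
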